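/- Compatibility of the capacity of entanglement with the antiflatness ordering: let p, q be strictly positive probability vectors on Fin d (all entries positive). If for all 0 < α < β one has S α p - S β p ≤ S α q - S β q, then V p ≤ V q. -/

import Mathlib

open Real Filter Set Topology


/-- Rényi entropy of a probability vector `p` on `Fin d`
(Shannon entropy at `α = 1`; powers are `Real.rpow`). -/
noncomputable def S {d : ℕ} (α : ℝ) (p : Fin d → ℝ) : ℝ :=
  if α = 1 then -(∑ i, p i * Real.log (p i))
  else (1 - α)⁻¹ * Real.log (∑ i, (p i) ^ α)

/-- The capacity of entanglement (varentropy) of a strictly positive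
probability vector. -/
noncomputable def V {d : ℕ} (p : Fin d → ℝ) : ℝ :=
  (∑ i, p i * (Real.log (p i)) ^ 2) - (∑ i, p i * Real.log (p i)) ^ 2

lemma key_tendsto {d : ℕ} (p : Fin d → ℝ) (hp : ∀ i, 0 < p i) (hp1 : ∑ i, p i = 1) :
    Tendsto (fun x => (S x p - S 1 p) / (x - 1)) (𝓝[≠] (1:ℝ)) (𝓝 (-(V p) / 2)) := by
  set L : ℝ := ∑ i, p i * Real.log (p i) with hL
  set Q : ℝ := ∑ i, p i * (Real.log (p i)) ^ 2 with hQ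
  set G : ℝ → ℝ := fun x => ∑ i, (p i) ^ x with hG
  set G1 : ℝ → ℝ := fun x => ∑ i, (p i) ^ x * Real.log (p i) with hG1
  set G2 : ℝ → ℝ := fun x => ∑ i, (p i) ^ x * (Real.log (p i)) ^ 2 with hG2
  have hGpos : ∀ x, 0 < G x := by
    intro x
    have hd : Nonempty (Fin d) := by
      rcases Nat.eq_zero_or_pos d with rfl | h
      · simp at hp1
      · exact ⟨⟨0, h⟩⟩
    exact Finset.sum_pos (fun i _ => Real.rpow_pos_of_pos (hp i) x) Finset.univ_nonempty
  have hGd : ∀ x, HasDerivAt G (G1 x) x := fun x =>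
    HasDerivAt.fun_sum (fun i _ => (Real.hasStrictDerivAt_const_rpow (hp i) x).hasDerivAt)
  have hG1d : ∀ x, HasDerivAt G1 (G2 x) x := by
    intro x
    have : ∀ i ∈ Finset.univ, HasDerivAt (fun y => (p i) ^ y * Real.log (p i))
        ((p i) ^ x * (Real.log (p i)) ^ 2) x := by
      intro i _
      have := ((Real.hasStrictDerivAt_const_rpow (hp i) x).hasDerivAt).mul_const (Real.log (p i))
      exact this.congr_deriv (by ring)
    exact HasDerivAt.fun_sum this
  have hGone : G 1 = 1 :=
    (Finset.sum_congr rfl fun i _ => Real.rpow_one _).trans hp1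
  have hG1one : G1 1 = L := by
    simp only [hG1, hL]
    exact Finset.sum_congr rfl fun i _ => by rw [Real.rpow_one]
  have hG2one : G2 1 = Q := by
    simp only [hG2, hQ]
    exact Finset.sum_congr rfl fun i _ => by rw [Real.rpow_one]
  -- φ x = log (G x) - L * (x - 1)
  set φ : ℝ → ℝ := fun x => Real.log (G x) - L * (x - 1) with hφ
  set φ' : ℝ → ℝ := fun x => G1 x / G x - L with hφ'
  have hφd : ∀ x, HasDerivAt φ (φ' x) x := by
    intro x
    have h1 : HasDerivAt (fun y => Real.log (G y)) (G1 x / G x) x :=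
      (hGd x).log (hGpos x).ne'
    have h2 : HasDerivAt (fun y => L * (y - 1)) L x := by
      simpa using ((hasDerivAt_id x).sub_const 1).const_mul L
    exact h1.sub h2
  have hφ'd : HasDerivAt φ' (V p) 1 := by
    have h1 : HasDerivAt (fun y => G1 y / G y)
        ((G2 1 * G 1 - G1 1 * G1 1) / (G 1) ^ 2) 1 :=
      (hG1d 1).div (hGd 1) (hGpos 1).ne'
    have h2 : (G2 1 * G 1 - G1 1 * G1 1) / (G 1) ^ 2 = V p := by
      rw [hGone, hG1one, hG2one]; simp [V, hL, hQ]; ring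
    rw [h2] at h1
    simpa [hφ'] using h1.sub_const L
  have hφ'one : φ' 1 = 0 := by simp [hφ', hGone, hG1one]
  have hφone : φ 1 = 0 := by simp [hφ, hGone]
  -- L'Hôpital
  have hgd : ∀ x : ℝ, HasDerivAt (fun y => (y - 1) ^ 2) (2 * (x - 1)) x := by
    intro x
    have := ((hasDerivAt_id x).sub_const 1).fun_pow 2
    simpa using this
  have hdiv : Tendsto (fun x => φ' x / (2 * (x - 1))) (𝓝[≠] (1:ℝ)) (𝓝 (V p / 2)) := by
    have hslope : Tendsto (slope φ' 1) (𝓝[≠] (1:ℝ)) (𝓝 (V p)) :=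
      hasDerivAt_iff_tendsto_slope.mp hφ'd
    have heq : ∀ x ∈ ({(1:ℝ)}ᶜ : Set ℝ), slope φ' 1 x / 2 = φ' x / (2 * (x - 1)) := by
      intro x hx
      have hx1 : x - 1 ≠ 0 := sub_ne_zero.mpr hx
      rw [slope_def_field, hφ'one, sub_zero, div_div, mul_comm]
    have := (hslope.div_const 2)
    refine Tendsto.congr' ?_ this
    filter_upwards [self_mem_nhdsWithin] with x hx using heq x hx
  have hlh : Tendsto (fun x => φ x / (x - 1) ^ 2) (𝓝[≠] (1:ℝ)) (𝓝 (V p / 2)) := by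
    apply HasDerivAt.lhopital_zero_nhdsNE (f' := φ') (g' := fun x => 2 * (x - 1))
    · filter_upwards with x using hφd x
    · filter_upwards with x using hgd x
    · filter_upwards [self_mem_nhdsWithin] with x hx
      exact mul_ne_zero two_ne_zero (sub_ne_zero.mpr hx)
    · have : ContinuousAt φ 1 := (hφd 1).continuousAt
      have := this.tendsto
      rw [hφone] at this
      exact this.mono_left nhdsWithin_le_nhds
    · have : Tendsto (fun x : ℝ => (x - 1) ^ 2) (𝓝 1) (𝓝 0) := by
        have : ContinuousAt (fun x : ℝ => (x - 1) ^ 2) 1 := by fun_prop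
        simpa using this.tendsto
      exact this.mono_left nhdsWithin_le_nhds
    · exact hdiv
  have hneg : Tendsto (fun x => -(φ x / (x - 1) ^ 2)) (𝓝[≠] (1:ℝ)) (𝓝 (-(V p) / 2)) := by
    have := hlh.neg
    simpa [neg_div] using this
  refine Tendsto.congr' ?_ hneg
  filter_upwards [self_mem_nhdsWithin] with x hx
  have hxne : x ≠ 1 := hx
  have hx1 : x - 1 ≠ 0 := sub_ne_zero.mpr hxne
  have hx2 : (1:ℝ) - x ≠ 0 := fun h => hxne (by linarith)
  have hS : S x p = (1 - x)⁻¹ * Real.log (G x) := by simp [S, hxne, hG]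
  have hS1 : S 1 p = -L := by simp [S, hL]
  rw [hS, hS1, hφ]
  field_simp
  ring

/-- Compatibility of the capacity of entanglement with the antiflatness
ordering. -/
theorem capacity_compatible_with_antiflat_order {d : ℕ} (p q : Fin d → ℝ)
    (hp : ∀ i, 0 < p i) (hp1 : ∑ i, p i = 1)
    (hq : ∀ i, 0 < q i) (hq1 : ∑ i, q i = 1)
    (hspread : ∀ α β : ℝ, 0 < α → α < β → S α p - S β p ≤ S α q - S β q) :
    V p ≤ V q := by
  have hP := (key_tendsto p hp hp1).mono_left
    (nhdsWithin_mono 1 (fun x (hx : x ∈ Ioi (1:ℝ)) => ne_of_gt hx))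
  have hQ := (key_tendsto q hq hq1).mono_left
    (nhdsWithin_mono 1 (fun x (hx : x ∈ Ioi (1:ℝ)) => ne_of_gt hx))
  have hle : -(V q) / 2 ≤ -(V p) / 2 := by
    refine le_of_tendsto_of_tendsto hQ hP ?_
    filter_upwards [self_mem_nhdsWithin] with x hx
    have hx1 : (1:ℝ) < x := hx
    have := hspread 1 x one_pos hx1
    have h2 : S x q - S 1 q ≤ S x p - S 1 p := by linarith
    gcongr
  linarith
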